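/- Let k > 1 and define f_k(z) = ((1+k)/2 − z)^((1+k)/(2k)) · (z + (k−1)/2)^((k−1)/(2k)) for z ∈ [0,1]. Then f_k is differentiable and positive on [0,1] and satisfies f_k(z)·f_k′(1−z) = z − 1 for every z ∈ [0,1]. -/

import Mathlib

open Real

/-- For `k > 1`, the function
`f_k z = ((1+k)/2 - z)^((1+k)/(2k)) · (z + (k-1)/2)^((k-1)/(2k))`
is differentiable and positive on `[0,1]`, and satisfies the functional
differential equation `f_k z · f_k' (1-z) = z - 1` on `[0,1]`. -/
theorem fk_solves_fde (k : ℝ) (hk : 1 < k) (f : ℝ → ℝ)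
    (hf : ∀ z, f z = ((1 + k) / 2 - z) ^ ((1 + k) / (2 * k)) *
                     (z + (k - 1) / 2) ^ ((k - 1) / (2 * k))) :
    (∀ z ∈ Set.Icc (0:ℝ) 1, DifferentiableAt ℝ f z ∧ 0 < f z) ∧
    (∀ z ∈ Set.Icc (0:ℝ) 1, f z * deriv f (1 - z) = z - 1) := by
  have hfe : f = fun z => ((1 + k) / 2 - z) ^ ((1 + k) / (2 * k)) *
      (z + (k - 1) / 2) ^ ((k - 1) / (2 * k)) := funext hf
  subst hfe
  have hk0 : (0:ℝ) < k := lt_trans one_pos hk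
  set a : ℝ := (1 + k) / (2 * k) with ha
  set b : ℝ := (k - 1) / (2 * k) with hb
  have hab : a + b = 1 := by
    rw [ha, hb]; field_simp; ring
  have key : ∀ z : ℝ, 0 ≤ z → z ≤ 1 →
      HasDerivAt (fun z => ((1 + k) / 2 - z) ^ a * (z + (k - 1) / 2) ^ b)
        (a * ((1+k)/2 - z) ^ (a-1) * (-1) * ((z + (k-1)/2) ^ b)
          + ((1+k)/2 - z) ^ a * (b * (z + (k-1)/2) ^ (b-1) * 1)) z := by
    intro z hz0 hz1
    have hu : 0 < (1+k)/2 - z := by linarith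
    have hv : 0 < z + (k-1)/2 := by linarith
    have hin1 : HasDerivAt (fun z : ℝ => (1+k)/2 - z) (-1) z := by
      simpa using (hasDerivAt_id z).const_sub ((1+k)/2)
    have hin2 : HasDerivAt (fun z : ℝ => z + (k-1)/2) 1 z := by
      simpa using (hasDerivAt_id z).add_const ((k-1)/2)
    have h1 : HasDerivAt (fun z : ℝ => ((1+k)/2 - z) ^ a)
        (a * ((1+k)/2 - z) ^ (a-1) * (-1)) z :=
      (Real.hasDerivAt_rpow_const (p := a) (Or.inl hu.ne')).comp z hin1
    have h2 : HasDerivAt (fun z : ℝ => (z + (k-1)/2) ^ b)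
        (b * (z + (k-1)/2) ^ (b-1) * 1) z :=
      by have := (Real.hasDerivAt_rpow_const (p := b) (Or.inl hv.ne')).comp z hin2; exact this
    exact h1.mul h2
  constructor
  · intro z hz
    obtain ⟨hz0, hz1⟩ := hz
    have hu : 0 < (1+k)/2 - z := by linarith
    have hv : 0 < z + (k-1)/2 := by linarith
    exact ⟨(key z hz0 hz1).differentiableAt,
      mul_pos (Real.rpow_pos_of_pos hu a) (Real.rpow_pos_of_pos hv b)⟩
  · intro z hz
    obtain ⟨hz0, hz1⟩ := hz
    have hu : 0 < (1+k)/2 - z := by linarith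
    have hv : 0 < z + (k-1)/2 := by linarith
    have hd := (key (1 - z) (by linarith) (by linarith)).deriv
    have e1 : (1+k)/2 - (1 - z) = z + (k-1)/2 := by ring
    have e2 : (1 - z) + (k-1)/2 = (1+k)/2 - z := by ring
    rw [e1, e2] at hd
    rw [hd]
    set u : ℝ := (1+k)/2 - z
    set v : ℝ := z + (k-1)/2
    have h3 : u ^ a * u ^ b = u := by
      rw [← Real.rpow_add hu, hab, Real.rpow_one]
    have h4 : v ^ b * v ^ (a-1) = 1 := by
      rw [← Real.rpow_add hv, show b + (a-1) = 0 by linarith, Real.rpow_zero]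
    have h5 : u ^ a * u ^ (b-1) = 1 := by
      rw [← Real.rpow_add hu, show a + (b-1) = 0 by linarith, Real.rpow_zero]
    have h6 : v ^ b * v ^ a = v := by
      rw [← Real.rpow_add hv, show b + a = 1 by linarith, Real.rpow_one]
    have habv : -(a * u) + b * v = z - 1 := by
      rw [ha, hb]; field_simp [u, v]; ring
    calc u ^ a * v ^ b *
          (a * v ^ (a-1) * (-1) * u ^ b + v ^ a * (b * u ^ (b-1) * 1))
        = -(a * (u ^ a * u ^ b) * (v ^ b * v ^ (a-1)))
            + b * (u ^ a * u ^ (b-1)) * (v ^ b * v ^ a) := by ring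
      _ = -(a * u) + b * v := by rw [h3, h4, h5, h6]; ring
      _ = z - 1 := habv
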